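/- Let φ : (A, P_A) → (B, P_B) be a morphism of Nijenhuis algebras and ⟨(M,P_M),(N,P_N),ψ⟩ a Nijenhuis φ-bimodule. Then ψ! := M ⊕ N ⊕ Nφ with the actions (x+y_1+y_2φ)(m+n_1+n_2φ) = xm + y_1n_1 + (y_2ψ(m)+y_1n_2)φ and (m+n_1+n_2φ)(x+y_1+y_2φ) = mx + n_1y_1 + (n_2φ(x)+n_1y_2)φ is a φ!-bimodule, and the linear map P_{ψ!}(m+n_1+n_2φ) := P_M(m)+P_N(n_1)+P_N(n_2)φ makes (ψ!, P_{ψ!}) a Nijenhuis bimodule over the Nijenhuis algebra (φ!, P_{φ!}). -/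

import Mathlib

/-- The Nijenhuis operator condition on an associative algebra. -/
def IsNijenhuis {A : Type*} [Ring A] (P : A → A) : Prop :=
  ∀ x y : A, P x * P y = P (P x * y + x * P y - P (x * y))

/-- The deformed product `x ·_P y := P x * y + x * P y - P (x * y)`. -/
def dmul {A : Type*} [Ring A] (P : A → A) (x y : A) : A :=
  P x * y + x * P y - P (x * y)

/-- A bimodule structure over an associative algebra `A`, with `l x m = x·m`
and `r x m = m·x`. -/
structure BimoduleStr (k A M : Type*) [Field k] [Ring A] [Algebra k A]
    [AddCommGroup M] [Module k M] where
  l : A →ₗ[k] M →ₗ[k] M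
  r : A →ₗ[k] M →ₗ[k] M
  l_mul : ∀ (x y : A) (m : M), l (x * y) m = l x (l y m)
  r_mul : ∀ (x y : A) (m : M), r (x * y) m = r y (r x m)
  lr : ∀ (x y : A) (m : M), r y (l x m) = l x (r y m)

def actL {k A M : Type*} [Field k] [Ring A] [Algebra k A] [AddCommGroup M] [Module k M]
    (ρ : BimoduleStr k A M) : A → M → M := fun a m => ρ.l a m

def actR {k A M : Type*} [Field k] [Ring A] [Algebra k A] [AddCommGroup M] [Module k M]
    (ρ : BimoduleStr k A M) : A → M → M := fun a m => ρ.r a m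

/-- `(M, PM)` is a Nijenhuis bimodule over the Nijenhuis algebra `(A, P)`. -/
def IsNijBimodule {k A M : Type*} [Field k] [Ring A] [Algebra k A]
    [AddCommGroup M] [Module k M] (P : A →ₗ[k] A) (ρ : BimoduleStr k A M)
    (PM : M →ₗ[k] M) : Prop :=
  (∀ (x : A) (m : M), ρ.l (P x) (PM m) = PM (ρ.l (P x) m + ρ.l x (PM m) - PM (ρ.l x m))) ∧
  (∀ (x : A) (m : M), ρ.r (P x) (PM m) = PM (ρ.r x (PM m) + ρ.r (P x) m - PM (ρ.r x m)))

/-- The deformed left action `x ▷ m := P(x)·m + x·PM(m) - PM(x·m)`. -/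
def dL {A M : Type*} [AddCommGroup M] (P : A → A) (PM : M → M)
    (l : A → M → M) (x : A) (m : M) : M :=
  l (P x) m + l x (PM m) - PM (l x m)

/-- The deformed right action `m ◁ x := PM(m)·x + m·P(x) - PM(m·x)`. -/
def dR {A M : Type*} [AddCommGroup M] (P : A → A) (PM : M → M)
    (r : A → M → M) (x : A) (m : M) : M :=
  r x (PM m) + r (P x) m - PM (r x m)

/-- The multiplication of the mapping ring `φ! = A ⊕ B ⊕ Bφ`:
`(x + y₁ + y₂φ)(x' + y₁' + y₂'φ) = xx' + y₁y₁' + (y₂ φ(x') + y₁ y₂')φ`. -/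
def bangMul {A B : Type*} [Ring A] [Ring B] (φ : A → B)
    (u v : A × B × B) : A × B × B :=
  (u.1 * v.1, u.2.1 * v.2.1, u.2.2 * φ v.1 + u.2.1 * v.2.2)

/-- The operator `P_{φ!}(x + y₁ + y₂φ) = PA(x) + PB(y₁) + PB(y₂)φ` on `φ!`. -/
def bangP {A B : Type*} (PA : A → A) (PB : B → B) (u : A × B × B) : A × B × B :=
  (PA u.1, PB u.2.1, PB u.2.2)

/-- The left action of `φ!` on `ψ! = M ⊕ N ⊕ Nφ`:
`(x + y₁ + y₂φ)(m + n₁ + n₂φ) = xm + y₁n₁ + (y₂ ψ(m) + y₁ n₂)φ`. -/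
def bangL {A B M N : Type*} [AddCommGroup N] (φ : A → B) (ψ : M → N)
    (lM : A → M → M) (lN : B → N → N)
    (u : A × B × B) (w : M × N × N) : M × N × N :=
  (lM u.1 w.1, lN u.2.1 w.2.1, lN u.2.2 (ψ w.1) + lN u.2.1 w.2.2)

/-- The right action of `φ!` on `ψ! = M ⊕ N ⊕ Nφ`:
`(m + n₁ + n₂φ)(x + y₁ + y₂φ) = mx + n₁y₁ + (n₂ φ(x) + n₁ y₂)φ`. -/
def bangR {A B M N : Type*} [AddCommGroup N] (φ : A → B)
    (rM : A → M → M) (rN : B → N → N)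
    (u : A × B × B) (w : M × N × N) : M × N × N :=
  (rM u.1 w.1, rN u.2.1 w.2.1, rN (φ u.1) w.2.2 + rN u.2.2 w.2.1)

/-- The operator `P_{ψ!}(m + n₁ + n₂φ) = PM(m) + PN(n₁) + PN(n₂)φ` on `ψ!`. -/
def bangPMod {M N : Type*} (PM : M → M) (PN : N → N) (w : M × N × N) : M × N × N :=
  (PM w.1, PN w.2.1, PN w.2.2)

/-- The Gerstenhaber–Schack comparison map `τ` in degree `m+1`, sending a triple
`(Γᴬ, Γᴮ, Γᴬᴮ) ∈ Cⁿ_mor(φ, ψ)` to a cochain of `φ!` with values in `ψ!`. -/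
def tauMap {A B M N : Type*} [AddCommGroup M] [AddCommGroup N]
    (φ : A → B) (lN : B → N → N) (m : ℕ)
    (GA : (Fin (m+1) → A) → M) (GB : (Fin (m+1) → B) → N)
    (GAB : (Fin m → A) → N)
    (u : Fin (m+1) → A × B × B) : M × N × N :=
  ( GA (fun i => (u i).1),
    GB (fun i => (u i).2.1),
    (∑ r : Fin (m+1), GB (fun i =>
        if (i : ℕ) < (r : ℕ) then (u i).2.1
        else if i = r then (u i).2.2
        else φ ((u i).1)))
      + lN ((u 0).2.2) (GAB (fun i : Fin m => (u i.succ).1)) )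

/-- for a Nijenhuis `φ`-bimodule `⟨(M,PM),(N,PN),ψ⟩`, the space
`ψ! = M ⊕ N ⊕ Nφ` with the displayed actions is a `φ!`-bimodule, and
`P_{ψ!}` makes `(ψ!, P_{ψ!})` a Nijenhuis bimodule over `(φ!, P_{φ!})`. -/
theorem bang_is_nijenhuis_bimodule {k A B M N : Type*} [Field k] [Ring A]
    [Algebra k A] [Ring B] [Algebra k B]
    [AddCommGroup M] [Module k M] [AddCommGroup N] [Module k N]
    (PA : A →ₗ[k] A) (hA : IsNijenhuis (⇑PA))
    (PB : B →ₗ[k] B) (hB : IsNijenhuis (⇑PB))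
    (φ : A →ₐ[k] B) (hφ : ∀ x : A, φ (PA x) = PB (φ x))
    (ρM : BimoduleStr k A M) (PM : M →ₗ[k] M) (hM : IsNijBimodule PA ρM PM)
    (ρN : BimoduleStr k B N) (PN : N →ₗ[k] N) (hN : IsNijBimodule PB ρN PN)
    (ψ : M →ₗ[k] N)
    (hψl : ∀ (x : A) (m : M), ψ (ρM.l x m) = ρN.l (φ x) (ψ m))
    (hψr : ∀ (x : A) (m : M), ψ (ρM.r x m) = ρN.r (φ x) (ψ m))
    (hψP : ∀ m : M, ψ (PM m) = PN (ψ m)) :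
    -- `ψ!` is a bimodule over the associative algebra `φ!`
    (∀ (u v : A × B × B) (w : M × N × N),
        bangL (⇑φ) (⇑ψ) (actL ρM) (actL ρN) (bangMul (⇑φ) u v) w
          = bangL (⇑φ) (⇑ψ) (actL ρM) (actL ρN) u
              (bangL (⇑φ) (⇑ψ) (actL ρM) (actL ρN) v w))
    ∧ (∀ (u v : A × B × B) (w : M × N × N),
        bangR (⇑φ) (actR ρM) (actR ρN) (bangMul (⇑φ) u v) w
          = bangR (⇑φ) (actR ρM) (actR ρN) v
              (bangR (⇑φ) (actR ρM) (actR ρN) u w))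
    ∧ (∀ (u v : A × B × B) (w : M × N × N),
        bangR (⇑φ) (actR ρM) (actR ρN) v
            (bangL (⇑φ) (⇑ψ) (actL ρM) (actL ρN) u w)
          = bangL (⇑φ) (⇑ψ) (actL ρM) (actL ρN) u
              (bangR (⇑φ) (actR ρM) (actR ρN) v w))
    -- and `(ψ!, P_{ψ!})` is a Nijenhuis bimodule over `(φ!, P_{φ!})`
    ∧ (∀ (u : A × B × B) (w : M × N × N),
        bangL (⇑φ) (⇑ψ) (actL ρM) (actL ρN) (bangP (⇑PA) (⇑PB) u)
            (bangPMod (⇑PM) (⇑PN) w)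
          = bangPMod (⇑PM) (⇑PN)
              (bangL (⇑φ) (⇑ψ) (actL ρM) (actL ρN) (bangP (⇑PA) (⇑PB) u) w
                + bangL (⇑φ) (⇑ψ) (actL ρM) (actL ρN) u (bangPMod (⇑PM) (⇑PN) w)
                - bangPMod (⇑PM) (⇑PN)
                    (bangL (⇑φ) (⇑ψ) (actL ρM) (actL ρN) u w)))
    ∧ (∀ (u : A × B × B) (w : M × N × N),
        bangR (⇑φ) (actR ρM) (actR ρN) (bangP (⇑PA) (⇑PB) u)
            (bangPMod (⇑PM) (⇑PN) w)
          = bangPMod (⇑PM) (⇑PN)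
              (bangR (⇑φ) (actR ρM) (actR ρN) u (bangPMod (⇑PM) (⇑PN) w)
                + bangR (⇑φ) (actR ρM) (actR ρN) (bangP (⇑PA) (⇑PB) u) w
                - bangPMod (⇑PM) (⇑PN)
                    (bangR (⇑φ) (actR ρM) (actR ρN) u w))) := by
  obtain ⟨hMl, hMr⟩ := hM
  obtain ⟨hNl, hNr⟩ := hN
  refine ⟨?_, ?_, ?_, ?_, ?_⟩ <;>
    intros <;>
    simp only [bangL, bangR, bangMul, bangP, bangPMod, actL, actR, hφ, hψl, hψr, hψP,
      ρM.l_mul, ρN.l_mul, ρM.r_mul, ρN.r_mul, ρM.lr, ρN.lr, hMl, hMr, hNl, hNr,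
      map_mul, map_add, map_sub, LinearMap.add_apply, LinearMap.sub_apply, Prod.mk.injEq,
      Prod.fst_add, Prod.snd_add, Prod.fst_sub, Prod.snd_sub] <;>
    refine ⟨trivial, trivial, by abel⟩
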